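/- The circulant graph H_{2n,2n+3} (on vertices v_0,...,v_{2n+2}, with v_i ~ v_j iff i−n ≤ j ≤ i+n mod 2n+3, j ≠ i) is (2n² + 3n − 1, 1)-distance antimagic; in particular the labeling f(v_i) = 2n+3−i for 0 ≤ i ≤ n+1 and for i = 2n+2, and f(v_i) = i−n for n+2 ≤ i ≤ 2n+1, yields weights forming the set {2n²+3n−1, 2n²+3n, ..., 2n²+5n+1}. -/

import Mathlib

open scoped Classical
open Finset

/-- Weight of a vertex: sum of labels over its open neighborhood. -/
noncomputable def wsum {V : Type*} [Fintype V] (G : SimpleGraph V) (f : V → ℕ) (u : V) : ℕ :=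
  ∑ v ∈ Finset.univ.filter (fun v => G.Adj u v), f v

/-- A graph is distance magic if some bijective labeling by 1,...,n has constant weights. -/
def IsDistanceMagic {V : Type*} [Fintype V] (G : SimpleGraph V) : Prop :=
  ∃ (f : V ≃ Fin (Fintype.card V)) (c : ℕ),
    ∀ u, wsum G (fun v => (f v : ℕ) + 1) u = c

/-- `G` is `r`-regular. -/
def IsRegularDeg {V : Type*} [Fintype V] (G : SimpleGraph V) (r : ℕ) : Prop :=
  ∀ u : V, (Finset.univ.filter (fun v => G.Adj u v)).card = r

/-- `(a,d)`-distance antimagic: some bijective labeling by 1,...,n has weight set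
`{a, a+d, ..., a+(n-1)d}`. -/
def IsDistAntimagic {V : Type*} [Fintype V] (G : SimpleGraph V) (a d : ℕ) : Prop :=
  ∃ f : V ≃ Fin (Fintype.card V),
    Finset.image (fun u => wsum G (fun v => (f v : ℕ) + 1) u) Finset.univ
      = Finset.image (fun i : Fin (Fintype.card V) => a + (i : ℕ) * d) Finset.univ

/-- Circulant graph on `N` vertices with jumps `1,...,m` (so `H_{2m,N} = C_N^m`). -/
def circulant (N m : ℕ) : SimpleGraph (Fin N) :=
  SimpleGraph.fromRel (fun i j => ∃ k, 1 ≤ k ∧ k ≤ m ∧ ((i : ℕ) + k) % N = (j : ℕ))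

/-- The graph `(K_{n-1} - M) + K_1`: vertex `0` joined to all, and vertices `1,...,n-1`
forming a complete graph minus the perfect matching pairing `i` with `i + (n-1)/2 (mod n-1)`. -/
def calG (n : ℕ) : SimpleGraph (Fin n) :=
  SimpleGraph.fromRel (fun i j =>
    (i : ℕ) = 0 ∨ (j : ℕ) = 0 ∨
      ¬ (((i : ℕ) - 1 + (n - 1) / 2) % (n - 1) = (j : ℕ) - 1))

/-- Lexicographic product `G ∘ H`. -/
def lexProd {α β : Type*} (G : SimpleGraph α) (H : SimpleGraph β) : SimpleGraph (α × β) where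
  Adj x y := G.Adj x.1 y.1 ∨ (x.1 = y.1 ∧ H.Adj x.2 y.2)
  symm := by
    constructor
    rintro ⟨a, b⟩ ⟨c, d⟩ (h | ⟨h1, h2⟩)
    · exact Or.inl h.symm
    · exact Or.inr ⟨h1.symm, h2.symm⟩
  loopless := by
    constructor
    rintro ⟨a, b⟩ (h | ⟨-, h⟩)
    · exact G.irrefl h
    · exact H.irrefl h

/-- Direct (tensor) product `G × H`. -/
def tensorProd {α β : Type*} (G : SimpleGraph α) (H : SimpleGraph β) : SimpleGraph (α × β) where
  Adj x y := G.Adj x.1 y.1 ∧ H.Adj x.2 y.2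
  symm := ⟨fun _ _ h => ⟨h.1.symm, h.2.symm⟩⟩
  loopless := ⟨fun x h => G.irrefl h.1⟩

/-- The Harary graph `H_{3,n}`. -/
noncomputable def harary3 (n : ℕ) : SimpleGraph (Fin n) :=
  circulant n 1 ⊔ SimpleGraph.fromRel (fun i j =>
    if n % 2 = 0 then
      ∃ k, 1 ≤ k ∧ k ≤ n / 2 ∧ (i : ℕ) = k ∧ (j : ℕ) = (k + n / 2) % n
    else
      ((i : ℕ) = 0 ∧ ((j : ℕ) = (n - 1) / 2 ∨ (j : ℕ) = (n + 1) / 2)) ∨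
      (∃ k, 1 ≤ k ∧ k < (n - 1) / 2 ∧ (i : ℕ) = k ∧ (j : ℕ) = (k + (n + 1) / 2) % n))

/-- The Harary graph `H_{2n+1,2n+3}`: `C_{2n+3}^n` together with edges `v_0 v_{n+1}`,
`v_0 v_{n+2}` and `v_i v_{i+n+2}` for `1 ≤ i < n+1`. -/
def hararyOdd (n : ℕ) : SimpleGraph (Fin (2 * n + 3)) :=
  circulant (2 * n + 3) n ⊔ SimpleGraph.fromRel (fun i j =>
    ((i : ℕ) = 0 ∧ ((j : ℕ) = n + 1 ∨ (j : ℕ) = n + 2)) ∨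
    (∃ k, 1 ≤ k ∧ k < n + 1 ∧ (i : ℕ) = k ∧ (j : ℕ) = k + n + 2))

/-- The Harary graph `H_{4n+1,4n+4}`: circulant with jumps `1,...,2n` and `2n+2`. -/
def harary41 (n : ℕ) : SimpleGraph (Fin (4 * n + 4)) :=
  SimpleGraph.fromRel (fun i j =>
    ∃ k, ((1 ≤ k ∧ k ≤ 2 * n) ∨ k = 2 * n + 2) ∧ ((i : ℕ) + k) % (4 * n + 4) = (j : ℕ))

/-- The join `G + K_1`. -/
def joinK1 {V : Type*} (G : SimpleGraph V) : SimpleGraph (V ⊕ Unit) :=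
  SimpleGraph.fromRel (fun x y =>
    match x, y with
    | Sum.inl a, Sum.inl b => G.Adj a b
    | Sum.inl _, Sum.inr _ => True
    | Sum.inr _, _ => False)

/-- labeling on values -/
def lab (n i : ℕ) : ℕ := if i ≤ n + 1 ∨ i = 2 * n + 2 then 2 * n + 3 - i else i - n

def linv (n m : ℕ) : ℕ := if n + 2 ≤ m then 2 * n + 3 - m else if 2 ≤ m then m + n else 2 * n + 2

lemma lab_mem (n i : ℕ) (hi : i < 2 * n + 3) : 1 ≤ lab n i ∧ lab n i ≤ 2 * n + 3 := by
  unfold lab; split_ifs <;> omega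

lemma linv_lt (n m : ℕ) (h1 : 1 ≤ m) (h2 : m ≤ 2 * n + 3) : linv n m < 2 * n + 3 := by
  unfold linv; split_ifs <;> omega

lemma linv_lab (n i : ℕ) (hi : i < 2 * n + 3) : linv n (lab n i) = i := by
  unfold lab linv; split_ifs <;> omega

lemma lab_linv (n m : ℕ) (h1 : 1 ≤ m) (h2 : m ≤ 2 * n + 3) : lab n (linv n m) = m := by
  unfold lab linv; split_ifs <;> omega

lemma mod_small {a N : ℕ} (h : a < N) : a % N = a := Nat.mod_eq_of_lt h

lemma mod_big {a N : ℕ} (h1 : N ≤ a) (h2 : a < 2 * N) : a % N = a - N := by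
  rw [Nat.mod_eq_sub_mod h1, Nat.mod_eq_of_lt (by omega)]

lemma mod1 (n u : ℕ) (hu : u < 2 * n + 3) :
    (u + n + 1) % (2 * n + 3) = if u ≤ n + 1 then u + n + 1 else u - (n + 2) := by
  split_ifs with h
  · exact mod_small (by omega)
  · rw [mod_big (by omega) (by omega)]; omega

lemma mod2 (n u : ℕ) (hu : u < 2 * n + 3) :
    (u + n + 2) % (2 * n + 3) = if u ≤ n then u + n + 2 else u - (n + 1) := by
  split_ifs with h
  · exact mod_small (by omega)
  · rw [mod_big (by omega) (by omega)]; omega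

/-- the two "non-neighbours" of u -/
lemma not_adj_iff (n : ℕ) (u v : Fin (2 * n + 3)) :
    ¬ (circulant (2 * n + 3) n).Adj u v ↔
      (v : ℕ) = (u : ℕ) ∨ (v : ℕ) = ((u : ℕ) + n + 1) % (2 * n + 3) ∨
        (v : ℕ) = ((u : ℕ) + n + 2) % (2 * n + 3) := by
  have hu : (u : ℕ) < 2 * n + 3 := u.isLt
  have hv : (v : ℕ) < 2 * n + 3 := v.isLt
  rw [mod1 n u hu, mod2 n u hu]
  simp only [circulant, SimpleGraph.fromRel_adj, not_and, not_or]
  constructor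
  · intro h
    by_contra hc
    push_neg at hc
    obtain ⟨hc1, hc2, hc3⟩ := hc
    have hne : u ≠ v := fun e => hc1 (congrArg Fin.val e).symm
    obtain ⟨h1, h2⟩ := h hne
    rcases lt_or_gt_of_ne (fun e : (u:ℕ) = (v:ℕ) => hc1 e.symm) with hlt | hlt
    · -- u < v
      rcases le_or_gt ((v:ℕ) - (u:ℕ)) n with hk | hk
      · exact h1 ⟨(v:ℕ) - (u:ℕ), by omega, hk, by rw [mod_small (by omega)]; omega⟩
      · refine h2 ⟨(u:ℕ) + (2*n+3) - (v:ℕ), by split_ifs at hc2 hc3 <;> omega,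
          by split_ifs at hc2 hc3 <;> omega, ?_⟩
        rw [mod_big (by omega) (by omega)]; omega
    · -- v < u
      rcases le_or_gt ((u:ℕ) - (v:ℕ)) n with hk | hk
      · exact h2 ⟨(u:ℕ) - (v:ℕ), by omega, hk, by rw [mod_small (by omega)]; omega⟩
      · refine h1 ⟨(v:ℕ) + (2*n+3) - (u:ℕ), by split_ifs at hc2 hc3 <;> omega,
          by split_ifs at hc2 hc3 <;> omega, ?_⟩
        rw [mod_big (by omega) (by omega)]; omega
  · intro h hne
    constructor
    · rintro ⟨k, hk1, hk2, hk3⟩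
      rcases le_or_gt (2*n+3) ((u:ℕ) + k) with hb | hb
      · rw [mod_big hb (by omega)] at hk3
        split_ifs at h <;> omega
      · rw [mod_small hb] at hk3
        have : u ≠ v := hne
        have huv : (u:ℕ) ≠ (v:ℕ) := fun e => this (Fin.ext e)
        split_ifs at h <;> omega
    · rintro ⟨k, hk1, hk2, hk3⟩
      rcases le_or_gt (2*n+3) ((v:ℕ) + k) with hb | hb
      · rw [mod_big hb (by omega)] at hk3
        split_ifs at h <;> omega
      · rw [mod_small hb] at hk3
        have huv : (u:ℕ) ≠ (v:ℕ) := fun e => hne (Fin.ext e)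
        split_ifs at h <;> omega

lemma sum_Icc_one (N : ℕ) : ∑ m ∈ Finset.Icc 1 N, m = N * (N + 1) / 2 := by
  have h1 : Finset.Icc 1 N = Finset.Ico 1 (N + 1) := by
    ext x; simp [Nat.lt_succ_iff]
  have h2 : Finset.range (N + 1) = Finset.Ico 0 (N + 1) := by
    rw [Finset.range_eq_Ico]
  have h3 : Finset.Ico 0 (N + 1) = insert 0 (Finset.Ico 1 (N + 1)) := by
    ext x; simp; omega
  have h4 := Finset.sum_range_id_mul_two (N + 1)
  rw [h2, h3, Finset.sum_insert (by simp), Nat.add_sub_cancel] at h4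
  have h5 : (N + 1) * N = N * (N + 1) := Nat.mul_comm _ _
  rw [h1]; omega

lemma sum_lab (n : ℕ) : ∑ v : Fin (2 * n + 3), lab n (v : ℕ) = 2 * n ^ 2 + 7 * n + 6 := by
  have key : ∑ v : Fin (2 * n + 3), lab n (v : ℕ) = ∑ m ∈ Finset.Icc 1 (2 * n + 3), m := by
    refine Finset.sum_nbij' (fun v : Fin (2 * n + 3) => lab n (v : ℕ))
      (fun m => (⟨linv n m % (2 * n + 3), Nat.mod_lt _ (by omega)⟩ : Fin (2 * n + 3)))
      ?_ ?_ ?_ ?_ ?_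
    · intro v _
      have := lab_mem n (v : ℕ) v.isLt
      simp [Finset.mem_Icc]; omega
    · intro m _; exact Finset.mem_univ _
    · intro v _
      have h1 := lab_mem n (v : ℕ) v.isLt
      apply Fin.ext
      simp only
      rw [mod_small (linv_lt n _ h1.1 h1.2), linv_lab n _ v.isLt]
    · intro m hm
      rcases Finset.mem_Icc.mp hm with ⟨h1, h2⟩
      simp only
      rw [mod_small (linv_lt n _ h1 h2), lab_linv n _ h1 h2]
    · intro v _; rfl
  rw [key, sum_Icc_one]
  have : (2 * n + 3) * (2 * n + 3 + 1) = (2 * n ^ 2 + 7 * n + 6) * 2 := by ring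
  omega

lemma lab_low {n x : ℕ} (h : x ≤ n + 1) : lab n x = 2 * n + 3 - x := by
  unfold lab; rw [if_pos (Or.inl h)]

lemma lab_high {n x : ℕ} (h1 : n + 2 ≤ x) (h2 : x ≤ 2 * n + 1) : lab n x = x - n := by
  unfold lab; rw [if_neg (by omega)]

lemma lab_top (n : ℕ) : lab n (2 * n + 2) = 1 := by
  unfold lab; rw [if_pos (Or.inr rfl)]; omega

lemma wsum_lab (n : ℕ) (u : Fin (2 * n + 3)) :
    wsum (circulant (2 * n + 3) n) (fun v => lab n (v : ℕ)) u
      = 2 * n ^ 2 + 7 * n + 6 -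
        (lab n (u : ℕ) + lab n (((u : ℕ) + n + 1) % (2 * n + 3))
          + lab n (((u : ℕ) + n + 2) % (2 * n + 3))) := by
  have hu := u.isLt
  set A : Fin (2 * n + 3) := ⟨((u : ℕ) + n + 1) % (2 * n + 3), Nat.mod_lt _ (by omega)⟩ with hA
  set B : Fin (2 * n + 3) := ⟨((u : ℕ) + n + 2) % (2 * n + 3), Nat.mod_lt _ (by omega)⟩ with hB
  have e1 := mod1 n (u : ℕ) hu
  have e2 := mod2 n (u : ℕ) hu
  have d1 : (u : ℕ) ≠ (A : ℕ) := by rw [hA]; simp only; rw [e1]; split_ifs <;> omega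
  have d2 : (u : ℕ) ≠ (B : ℕ) := by rw [hB]; simp only; rw [e2]; split_ifs <;> omega
  have d3 : (A : ℕ) ≠ (B : ℕ) := by
    rw [hA, hB]; simp only; rw [e1, e2]; split_ifs <;> omega
  have hfilter : Finset.univ.filter (fun v => (circulant (2 * n + 3) n).Adj u v)
      = Finset.univ \ {u, A, B} := by
    ext v
    simp only [Finset.mem_filter, Finset.mem_univ, true_and, Finset.mem_sdiff,
      Finset.mem_insert, Finset.mem_singleton]
    have hiff := not_adj_iff n u v
    constructor
    · intro hadj
      rintro (rfl | rfl | rfl)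
      · exact (hiff.mpr (Or.inl rfl)) hadj
      · exact (hiff.mpr (Or.inr (Or.inl rfl))) hadj
      · exact (hiff.mpr (Or.inr (Or.inr rfl))) hadj
    · intro hD
      by_contra h
      rcases hiff.mp h with h' | h' | h'
      · exact hD (Or.inl (Fin.ext h'))
      · exact hD (Or.inr (Or.inl (Fin.ext h')))
      · exact hD (Or.inr (Or.inr (Fin.ext h')))
  have hAB : A ∉ ({B} : Finset (Fin (2 * n + 3))) := by
    simp only [Finset.mem_singleton, Fin.ext_iff]; exact d3
  have huAB : u ∉ ({A, B} : Finset (Fin (2 * n + 3))) := by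
    simp only [Finset.mem_insert, Finset.mem_singleton, Fin.ext_iff]
    push_neg; exact ⟨d1, d2⟩
  have hsplit := Finset.sum_sdiff (f := fun v : Fin (2 * n + 3) => lab n (v : ℕ))
    (Finset.subset_univ ({u, A, B} : Finset (Fin (2 * n + 3))))
  rw [Finset.sum_insert huAB, Finset.sum_insert hAB, Finset.sum_singleton, sum_lab] at hsplit
  rw [show (A : ℕ) = ((u : ℕ) + n + 1) % (2 * n + 3) from rfl,
    show (B : ℕ) = ((u : ℕ) + n + 2) % (2 * n + 3) from rfl] at hsplit
  rw [wsum, hfilter]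
  have h1 := lab_mem n (u : ℕ) hu
  have h2 := lab_mem n (((u : ℕ) + n + 1) % (2 * n + 3)) (Nat.mod_lt _ (by omega))
  have h3 := lab_mem n (((u : ℕ) + n + 2) % (2 * n + 3)) (Nat.mod_lt _ (by omega))
  omega

lemma lab_one {n x : ℕ} (h : x = 2 * n + 2) : lab n x = 1 := by
  subst h; exact lab_top n

lemma wval_eq (n : ℕ) (hn : 1 ≤ n) (u : ℕ) (hu : u < 2 * n + 3) :
    2 * n ^ 2 + 7 * n + 6 -
        (lab n u + lab n ((u + n + 1) % (2 * n + 3)) + lab n ((u + n + 2) % (2 * n + 3)))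
    = if u = 0 then 2 * n ^ 2 + 4 * n - 1
      else if u = n then 2 * n ^ 2 + 5 * n + 1
      else if u ≤ n - 1 then 2 * n ^ 2 + 5 * n - u
      else if u = n + 1 then 2 * n ^ 2 + 4 * n
      else if u = n + 2 then 2 * n ^ 2 + 3 * n - 1
      else if u = 2 * n + 2 then 2 * n ^ 2 + 5 * n
      else 2 * n ^ 2 + 2 * n - 3 + u := by
  obtain h | h | h | h | h | h :
      u = 0 ∨ (1 ≤ u ∧ u ≤ n - 1 ∧ 2 ≤ n) ∨ u = n ∨ u = n + 1 ∨
        (n + 2 ≤ u ∧ u ≤ 2 * n + 1) ∨ u = 2 * n + 2 := by omega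
  · rw [mod_small (by omega), mod_small (by omega),
      lab_low (by omega), lab_low (by omega), lab_high (by omega) (by omega)]
    split_ifs <;> omega
  · rw [mod_small (by omega), mod_small (by omega),
      lab_low (by omega), lab_high (by omega) (by omega), lab_high (by omega) (by omega)]
    split_ifs <;> omega
  · rw [mod_small (by omega), mod_small (by omega),
      lab_low (by omega), lab_high (by omega) (by omega), lab_one (by omega)]
    split_ifs <;> omega
  · rw [mod_small (by omega), mod_big (by omega) (by omega),
      lab_low (by omega), lab_one (by omega), lab_low (by omega)]
    split_ifs <;> omega
  · rw [mod_big (by omega) (by omega), mod_big (by omega) (by omega),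
      lab_high (by omega) (by omega), lab_low (by omega), lab_low (by omega)]
    split_ifs <;> omega
  · rw [mod_big (by omega) (by omega), mod_big (by omega) (by omega),
      lab_one (by omega), lab_low (by omega), lab_low (by omega)]
    split_ifs <;> omega

lemma image_weights (n : ℕ) (hn : 1 ≤ n) :
    Finset.image
        (fun u : Fin (2 * n + 3) => wsum (circulant (2 * n + 3) n) (fun v => lab n (v : ℕ)) u)
        Finset.univ
      = Finset.Icc (2 * n ^ 2 + 3 * n - 1) (2 * n ^ 2 + 5 * n + 1) := by
  ext m
  simp only [Finset.mem_image, Finset.mem_univ, true_and, Finset.mem_Icc]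
  constructor
  · rintro ⟨u, rfl⟩
    have hu := u.isLt
    rw [wsum_lab, wval_eq n hn (u : ℕ) hu]
    split_ifs <;> omega
  · rintro ⟨h1, h2⟩
    obtain hc | hc | hc | hc | hc | hc | hc :
        m = 2 * n ^ 2 + 5 * n + 1 ∨ m = 2 * n ^ 2 + 5 * n ∨
          (2 * n ^ 2 + 4 * n + 1 ≤ m ∧ m ≤ 2 * n ^ 2 + 5 * n - 1) ∨ m = 2 * n ^ 2 + 4 * n ∨
          m = 2 * n ^ 2 + 4 * n - 1 ∨ m = 2 * n ^ 2 + 3 * n - 1 ∨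
          (2 * n ^ 2 + 3 * n ≤ m ∧ m ≤ 2 * n ^ 2 + 4 * n - 2) := by omega
    · refine ⟨⟨n, by omega⟩, ?_⟩
      rw [wsum_lab]; simp only [Fin.val_mk]; rw [wval_eq n hn n (by omega)]
      rw [if_neg (by omega), if_pos rfl]; omega
    · refine ⟨⟨2 * n + 2, by omega⟩, ?_⟩
      rw [wsum_lab]; simp only [Fin.val_mk]; rw [wval_eq n hn (2 * n + 2) (by omega)]
      rw [if_neg (by omega : ¬(2 * n + 2 = 0)), if_neg (by omega : ¬(2 * n + 2 = n)),
        if_neg (by omega : ¬(2 * n + 2 ≤ n - 1)), if_neg (by omega : ¬(2 * n + 2 = n + 1)),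
        if_neg (by omega : ¬(2 * n + 2 = n + 2)), if_pos rfl]
      omega
    · refine ⟨⟨2 * n ^ 2 + 5 * n - m, by omega⟩, ?_⟩
      rw [wsum_lab]; simp only [Fin.val_mk]
      rw [wval_eq n hn (2 * n ^ 2 + 5 * n - m) (by omega)]
      rw [if_neg (by omega : ¬(2 * n ^ 2 + 5 * n - m = 0)),
        if_neg (by omega : ¬(2 * n ^ 2 + 5 * n - m = n)),
        if_pos (by omega : 2 * n ^ 2 + 5 * n - m ≤ n - 1)]
      omega
    · refine ⟨⟨n + 1, by omega⟩, ?_⟩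
      rw [wsum_lab]; simp only [Fin.val_mk]; rw [wval_eq n hn (n + 1) (by omega)]
      rw [if_neg (by omega : ¬(n + 1 = 0)), if_neg (by omega : ¬(n + 1 = n)),
        if_neg (by omega : ¬(n + 1 ≤ n - 1)), if_pos rfl]
      omega
    · refine ⟨⟨0, by omega⟩, ?_⟩
      rw [wsum_lab]; simp only [Fin.val_mk]; rw [wval_eq n hn 0 (by omega)]
      rw [if_pos rfl]; omega
    · refine ⟨⟨n + 2, by omega⟩, ?_⟩
      rw [wsum_lab]; simp only [Fin.val_mk]; rw [wval_eq n hn (n + 2) (by omega)]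
      rw [if_neg (by omega : ¬(n + 2 = 0)), if_neg (by omega : ¬(n + 2 = n)),
        if_neg (by omega : ¬(n + 2 ≤ n - 1)), if_neg (by omega : ¬(n + 2 = n + 1)),
        if_pos rfl]
      omega
    · refine ⟨⟨m - (2 * n ^ 2 + 2 * n - 3), by omega⟩, ?_⟩
      rw [wsum_lab]; simp only [Fin.val_mk]
      rw [wval_eq n hn (m - (2 * n ^ 2 + 2 * n - 3)) (by omega)]
      rw [if_neg (by omega : ¬(m - (2 * n ^ 2 + 2 * n - 3) = 0)),
        if_neg (by omega : ¬(m - (2 * n ^ 2 + 2 * n - 3) = n)),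
        if_neg (by omega : ¬(m - (2 * n ^ 2 + 2 * n - 3) ≤ n - 1)),
        if_neg (by omega : ¬(m - (2 * n ^ 2 + 2 * n - 3) = n + 1)),
        if_neg (by omega : ¬(m - (2 * n ^ 2 + 2 * n - 3) = n + 2)),
        if_neg (by omega : ¬(m - (2 * n ^ 2 + 2 * n - 3) = 2 * n + 2))]
      omega

/-- H_{2n,2n+3} is (2n^2+3n-1, 1)-distance antimagic, witnessed by the
stated labeling whose weights form {2n^2+3n-1, ..., 2n^2+5n+1}. -/
theorem harary_2n_2n3_antimagic (n : ℕ) (hn : 1 ≤ n) :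
    IsDistAntimagic (circulant (2 * n + 3) n) (2 * n ^ 2 + 3 * n - 1) 1 ∧
    Set.BijOn (fun i : Fin (2 * n + 3) =>
        if (i : ℕ) ≤ n + 1 ∨ (i : ℕ) = 2 * n + 2 then 2 * n + 3 - (i : ℕ) else (i : ℕ) - n)
      Set.univ (Set.Icc 1 (2 * n + 3)) ∧
    Finset.image (wsum (circulant (2 * n + 3) n)
        (fun i => if (i : ℕ) ≤ n + 1 ∨ (i : ℕ) = 2 * n + 2 then 2 * n + 3 - (i : ℕ)
                  else (i : ℕ) - n)) Finset.univ
      = Finset.Icc (2 * n ^ 2 + 3 * n - 1) (2 * n ^ 2 + 5 * n + 1) := by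
  have hcard : Fintype.card (Fin (2 * n + 3)) = 2 * n + 3 := Fintype.card_fin _
  refine ⟨?_, ?_, ?_⟩
  · -- (2n²+3n-1, 1)-distance antimagic
    let e : Fin (2 * n + 3) ≃ Fin (Fintype.card (Fin (2 * n + 3))) :=
      { toFun := fun i => ⟨lab n (i : ℕ) - 1, by
          have := lab_mem n (i : ℕ) i.isLt
          rw [Fintype.card_fin]; omega⟩
        invFun := fun m => ⟨linv n ((m : ℕ) + 1), by
          have hm : (m : ℕ) < 2 * n + 3 := lt_of_lt_of_le m.isLt (le_of_eq (Fintype.card_fin _))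
          exact linv_lt n _ (by omega) (by omega)⟩
        left_inv := fun i => by
          apply Fin.ext
          have := lab_mem n (i : ℕ) i.isLt
          show linv n (lab n (i : ℕ) - 1 + 1) = (i : ℕ)
          rw [show lab n (i : ℕ) - 1 + 1 = lab n (i : ℕ) by omega,
            linv_lab n _ i.isLt]
        right_inv := fun m => by
          apply Fin.ext
          have hm : (m : ℕ) < 2 * n + 3 := lt_of_lt_of_le m.isLt (le_of_eq (Fintype.card_fin _))
          show lab n (linv n ((m : ℕ) + 1)) - 1 = (m : ℕ)
          rw [lab_linv n _ (by omega) (by omega)]; omega }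
    refine ⟨e, ?_⟩
    have hfun : (fun v : Fin (2 * n + 3) => ((e v : ℕ) + 1))
        = fun v : Fin (2 * n + 3) => lab n (v : ℕ) := by
      funext v
      have := lab_mem n (v : ℕ) v.isLt
      show (lab n (v : ℕ) - 1) + 1 = lab n (v : ℕ)
      omega
    rw [hfun, image_weights n hn]
    ext m
    simp only [Finset.mem_Icc, Finset.mem_image, Finset.mem_univ, true_and]
    constructor
    · rintro ⟨hm1, hm2⟩
      refine ⟨⟨m - (2 * n ^ 2 + 3 * n - 1), by rw [Fintype.card_fin]; omega⟩, ?_⟩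
      show 2 * n ^ 2 + 3 * n - 1 + (m - (2 * n ^ 2 + 3 * n - 1)) * 1 = m
      omega
    · rintro ⟨i, rfl⟩
      have hi : (i : ℕ) < 2 * n + 3 := lt_of_lt_of_le i.isLt (le_of_eq hcard)
      omega
  · -- bijection onto {1, ..., 2n+3}
    refine ⟨fun i _ => ?_, fun a _ b _ hab => ?_, fun m hm => ?_⟩
    · have := lab_mem n (i : ℕ) i.isLt
      exact Set.mem_Icc.mpr ⟨this.1, this.2⟩
    · have hab' : lab n (a : ℕ) = lab n (b : ℕ) := hab
      apply Fin.ext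
      rw [← linv_lab n (a : ℕ) a.isLt, ← linv_lab n (b : ℕ) b.isLt, hab']
    · obtain ⟨h1, h2⟩ := Set.mem_Icc.mp hm
      exact ⟨⟨linv n m, linv_lt n m h1 h2⟩, Set.mem_univ _,
        lab_linv n m h1 h2⟩
  · exact image_weights n hn
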